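/- Suppose a finite simple graph G on n vertices is representable in ℝ^m (an injective map f : V(G) → ℝ^m realizing exactly two distances, one for edges and one for non-edges, assuming G is neither complete nor edgeless). Then n ≤ (m+1)(m+2)/2. -/

import Mathlib

open Finset

lemma sum_pull {α : Type*} (s : Finset α) (c : ℝ) (f g : α → ℝ)
    (h : ∀ k ∈ s, f k = c * g k) : ∑ k ∈ s, f k = c * ∑ k ∈ s, g k := by
  rw [Finset.mul_sum]; exact Finset.sum_congr rfl h

lemma sum_pull2 {α : Type*} (s : Finset α) (c : ℝ) (f g : α → ℝ)
    (h : ∀ k ∈ s, f k = g k * c) : ∑ k ∈ s, f k = (∑ k ∈ s, g k) * c := by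
  rw [Finset.sum_mul]; exact Finset.sum_congr rfl h

lemma sum_expand {m : ℕ} (t : ℝ) (x q : Fin m → ℝ) :
    ∑ k, (t * x k - q k)^2
      = (∑ k, x k^2) * t^2 - 2 * (∑ k, x k * q k) * t + ∑ k, q k^2 := by
  have : ∀ k ∈ univ, (t * x k - q k)^2
      = x k^2 * t^2 - 2 * (x k * q k) * t + q k^2 := fun k _ => by ring
  rw [Finset.sum_congr rfl this, Finset.sum_add_distrib, Finset.sum_sub_distrib,
    Finset.sum_mul]
  rw [show ∑ k, 2 * (x k * q k) * t = 2 * (∑ k, x k * q k) * t by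
    rw [Finset.mul_sum, Finset.sum_mul]]

lemma sum_expand1 {m : ℕ} (x q : Fin m → ℝ) :
    ∑ k, (x k - q k)^2
      = (∑ k, x k^2) - 2 * (∑ k, x k * q k) + ∑ k, q k^2 := by
  have := sum_expand 1 x q; simpa using this

lemma key_expand {m : ℕ} (x q : Fin m → ℝ) (A B : ℝ) :
    ((∑ k, (x k - q k)^2) - A) * ((∑ k, (x k - q k)^2) - B)
      = (∑ k, x k^2)^2
        + (∑ k, (-4 * q k) * ((∑ j, x j^2) * x k))
        + (∑ k, (2 * (∑ j, q j^2) - A - B) * (x k * x k))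
        + (∑ j, ∑ k, (4 * q j * q k) * (x j * x k))
        + (∑ k, (-2 * (2 * (∑ j, q j^2) - A - B) * q k) * x k)
        + ((∑ j, q j^2) - A) * ((∑ j, q j^2) - B) := by
  have e1 : ∑ k, (-4 * q k) * ((∑ j, x j^2) * x k)
      = (-4 * (∑ j, x j^2)) * ∑ k, x k * q k :=
    sum_pull univ (-4 * (∑ j, x j^2)) (fun k => (-4 * q k) * ((∑ j, x j^2) * x k))
      (fun k => x k * q k) (fun k _ => by ring)
  have e2 : ∑ k, (2 * (∑ j, q j^2) - A - B) * (x k * x k)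
      = (2 * (∑ j, q j^2) - A - B) * ∑ k, x k^2 :=
    sum_pull univ _ (fun k => (2 * (∑ j, q j^2) - A - B) * (x k * x k))
      (fun k => x k^2) (fun k _ => by ring)
  have e3 : ∑ j, ∑ k, (4 * q j * q k) * (x j * x k)
      = (∑ j, x j * q j) * (4 * ∑ k, x k * q k) := by
    refine Eq.trans (Finset.sum_congr rfl fun j _ =>
      sum_pull univ ((x j * q j) * 4) (fun k => (4 * q j * q k) * (x j * x k))
        (fun k => x k * q k) (fun k _ => by ring)) ?_
    exact sum_pull2 univ (4 * ∑ k, x k * q k)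
      (fun j => (x j * q j) * 4 * ∑ k, x k * q k) (fun j => x j * q j)
      (fun j _ => by ring)
  have e4 : ∑ k, (-2 * (2 * (∑ j, q j^2) - A - B) * q k) * x k
      = (-2 * (2 * (∑ j, q j^2) - A - B)) * ∑ k, x k * q k :=
    sum_pull univ _ (fun k => (-2 * (2 * (∑ j, q j^2) - A - B) * q k) * x k)
      (fun k => x k * q k) (fun k _ => by ring)
  rw [sum_expand1, e1, e2, e3, e4]; ring

theorem core_bound {m : ℕ} (hm : 0 < m) {V : Type*} [Fintype V]
    (p : V → EuclideanSpace ℝ (Fin m)) {a b : ℝ} (ha : a ≠ 0) (hb : b ≠ 0)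
    (hdist : ∀ i j : V, i ≠ j → dist (p i) (p j) = a ∨ dist (p i) (p j) = b) :
    Fintype.card V + (m + 1) ≤ 2 + 2 * m + Fintype.card (Sym2 (Fin m)) := by
  classical
  -- the quartic functions
  set F : V → EuclideanSpace ℝ (Fin m) → ℝ := fun i x =>
    ((∑ k, (x k - p i k)^2) - a^2) * ((∑ k, (x k - p i k)^2) - b^2) with hF
  have hdistsq : ∀ i j : V, i ≠ j →
      (∑ k, (p j k - p i k)^2) = a^2 ∨ (∑ k, (p j k - p i k)^2) = b^2 := by
    intro i j hij
    have : (dist (p j) (p i))^2 = ∑ k, (p j k - p i k)^2 := by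
      rw [EuclideanSpace.dist_eq, Real.sq_sqrt (by positivity)]
      exact Finset.sum_congr rfl fun k _ => by rw [Real.dist_eq, sq_abs]
    rcases hdist j i (Ne.symm hij) with h' | h'
    · left; rw [← this, h']
    · right; rw [← this, h']
  have hFoff : ∀ i j : V, i ≠ j → F i (p j) = 0 := by
    intro i j hij
    rcases hdistsq i j hij with h' | h' <;> simp [hF, h']
  have hFdiag : ∀ i : V, F i (p i) = a^2 * b^2 := by
    intro i; simp [hF]
  -- spanning family
  let q2 : Sym2 (Fin m) → EuclideanSpace ℝ (Fin m) → ℝ :=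
    Sym2.lift ⟨fun j k => fun x => x j * x k, fun j k => funext fun x => mul_comm _ _⟩
  let w : (Unit ⊕ Unit ⊕ Fin m ⊕ Fin m ⊕ Sym2 (Fin m)) → EuclideanSpace ℝ (Fin m) → ℝ :=
    Sum.elim (fun _ => fun x => (∑ k, x k^2)^2)
      (Sum.elim (fun _ => fun _ => (1:ℝ))
        (Sum.elim (fun k => fun x => x k)
          (Sum.elim (fun k => fun x => (∑ j, x j^2) * x k) q2)))
  let v : (V ⊕ Unit ⊕ Fin m) → EuclideanSpace ℝ (Fin m) → ℝ :=
    Sum.elim F (Sum.elim (fun _ => fun _ => (1:ℝ)) (fun k => fun x => x k))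
  have hq2 : ∀ j k : Fin m,
      (fun x : EuclideanSpace ℝ (Fin m) => x j * x k) ∈ Submodule.span ℝ (Set.range w) := by
    intro j k
    apply Submodule.subset_span
    exact ⟨Sum.inr (Sum.inr (Sum.inr (Sum.inr s(j, k)))), by
      simp only [w, Sum.elim_inr, q2, Sym2.lift_mk]⟩
  have hspan : ∀ idx, v idx ∈ Submodule.span ℝ (Set.range w) := by
    rintro (i | u | k)
    · -- F i
      have hFi : F i = (fun x : EuclideanSpace ℝ (Fin m) => (∑ k, x k^2)^2)
          + (∑ k : Fin m, (-4 * p i k) • (fun x : EuclideanSpace ℝ (Fin m) => (∑ j, x j^2) * x k))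
          + (∑ k : Fin m, (2*(∑ j, (p i j)^2) - a^2 - b^2) • (fun x : EuclideanSpace ℝ (Fin m) => x k * x k))
          + (∑ j : Fin m, ∑ k : Fin m, (4 * p i j * p i k) • (fun x : EuclideanSpace ℝ (Fin m) => x j * x k))
          + (∑ k : Fin m, (-2*(2*(∑ j, (p i j)^2) - a^2 - b^2) * p i k) • (fun x : EuclideanSpace ℝ (Fin m) => x k))
          + (((∑ j, (p i j)^2) - a^2) * ((∑ j, (p i j)^2) - b^2)) • (fun _ : EuclideanSpace ℝ (Fin m) => (1:ℝ)) := by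
        funext x
        simp only [Pi.add_apply, Finset.sum_apply, Pi.smul_apply, smul_eq_mul, hF]
        rw [mul_one]
        exact key_expand (fun k => x k) (fun k => p i k) (a^2) (b^2)
      show F i ∈ _
      rw [hFi]
      refine Submodule.add_mem _ (Submodule.add_mem _ (Submodule.add_mem _
        (Submodule.add_mem _ (Submodule.add_mem _ ?_ ?_) ?_) ?_) ?_) ?_
      · exact Submodule.subset_span ⟨Sum.inl (), rfl⟩
      · exact Submodule.sum_mem _ fun k _ => Submodule.smul_mem _ _
          (Submodule.subset_span ⟨Sum.inr (Sum.inr (Sum.inr (Sum.inl k))), rfl⟩)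
      · exact Submodule.sum_mem _ fun k _ => Submodule.smul_mem _ _ (hq2 k k)
      · exact Submodule.sum_mem _ fun j _ => Submodule.sum_mem _ fun k _ =>
          Submodule.smul_mem _ _ (hq2 j k)
      · exact Submodule.sum_mem _ fun k _ => Submodule.smul_mem _ _
          (Submodule.subset_span ⟨Sum.inr (Sum.inr (Sum.inl k)), rfl⟩)
      · exact Submodule.smul_mem _ _ (Submodule.subset_span ⟨Sum.inr (Sum.inl ()), rfl⟩)
    · exact Submodule.subset_span ⟨Sum.inr (Sum.inl ()), rfl⟩
    · exact Submodule.subset_span ⟨Sum.inr (Sum.inr (Sum.inl k)), rfl⟩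
  have hli : LinearIndependent ℝ v := by
    rw [Fintype.linearIndependent_iff]
    intro g hsum
    set α : V → ℝ := fun i => g (Sum.inl i) with hα
    set β0 : ℝ := g (Sum.inr (Sum.inl ())) with hβ0
    set β : Fin m → ℝ := fun k => g (Sum.inr (Sum.inr k)) with hβ
    have heval : ∀ x : EuclideanSpace ℝ (Fin m),
        (∑ i, α i * F i x) + β0 + (∑ k, β k * x k) = 0 := by
      intro x
      have hx := congrFun hsum x
      simp only [Finset.sum_apply, Pi.smul_apply, smul_eq_mul, Pi.zero_apply,
        Fintype.sum_sum_type, Fintype.sum_unique, Sum.elim_inl, Sum.elim_inr, v] at hx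
      linarith [hx]
    -- polynomial trick in t
    have hpoly : ∀ y : EuclideanSpace ℝ (Fin m),
        ((∑ i, α i) * (∑ k, y k^2)^2 = 0) ∧
        ((∑ k, y k^2) * (∑ i, α i * (∑ k, y k * p i k)) = 0) := by
      intro y
      set X : ℝ := ∑ k, y k^2 with hX
      set S : V → ℝ := fun i => ∑ k, y k * p i k with hS
      set Q : V → ℝ := fun i => ∑ k, (p i k)^2 with hQ
      set L : ℝ := ∑ k, β k * y k with hL
      have key : ∀ t : ℝ,
          (∑ i, α i * X^2) * t^4 + (∑ i, α i * (-4 * X * S i)) * t^3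
          + (∑ i, α i * (4 * (S i)^2 + (2*Q i - a^2 - b^2) * X)) * t^2
          + ((∑ i, α i * (-2 * S i * (2*Q i - a^2 - b^2))) + L) * t
          + ((∑ i, α i * ((Q i - a^2) * (Q i - b^2))) + β0) = 0 := by
        intro t
        have h1 := heval (t • y)
        have hy : ∑ k, β k * ((t • y) k) = L * t := by
          rw [hL, Finset.sum_mul]
          exact Finset.sum_congr rfl fun k _ => by
            rw [PiLp.smul_apply, smul_eq_mul]; ring
        rw [hy] at h1
        have hsub : ∀ i : V, (∑ k, ((t • y) k - p i k)^2) = X * t^2 - 2 * S i * t + Q i := by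
          intro i
          have : ∀ k ∈ univ, ((t • y) k - p i k)^2 = (t * y k - p i k)^2 := by
            intro k _; rw [PiLp.smul_apply, smul_eq_mul]
          rw [Finset.sum_congr rfl this, sum_expand]
        have h2 : ∑ i, α i * F i (t • y)
            = ∑ i, (α i * X^2 * t^4 + α i * (-4 * X * S i) * t^3
                + α i * (4 * (S i)^2 + (2*Q i - a^2 - b^2)*X) * t^2
                + α i * (-2 * S i * (2*Q i - a^2 - b^2)) * t
                + α i * ((Q i - a^2)*(Q i - b^2))) := by
          refine Finset.sum_congr rfl fun i _ => ?_
          have hFval : F i (t • y)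
              = ((X * t^2 - 2 * S i * t + Q i) - a^2) * ((X * t^2 - 2 * S i * t + Q i) - b^2) := by
            rw [hF]; dsimp only; rw [hsub i]
          rw [hFval]; ring
        rw [← h1, h2, Finset.sum_add_distrib, Finset.sum_add_distrib,
          Finset.sum_add_distrib, Finset.sum_add_distrib, Finset.sum_mul,
          Finset.sum_mul, Finset.sum_mul, add_mul, Finset.sum_mul]
        ring
      have k0 := key 0
      have k1 := key 1
      have k2 := key (-1)
      have k3 := key 2
      have k4 := key (-2)
      have hA4 : (∑ i, α i * X^2) = 0 := by nlinarith [k0, k1, k2, k3, k4]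
      have hA3 : (∑ i, α i * (-4 * X * S i)) = 0 := by nlinarith [k0, k1, k2, k3, k4]
      constructor
      · rw [← hA4, Finset.sum_mul]
      · have heq : ∑ i, α i * (-4 * X * S i) = (-4 * X) * ∑ i, α i * S i :=
          sum_pull univ (-4 * X) (fun i => α i * (-4 * X * S i))
            (fun i => α i * S i) (fun i _ => by ring)
        rw [heq] at hA3
        rcases mul_eq_zero.mp hA3 with h' | h'
        · have hX0 : X = 0 := by linarith
          rw [hX0, zero_mul]
        · rw [h', mul_zero]
    -- evaluate at standard basis vectors
    have hXe : ∀ j : Fin m, (∑ k, (EuclideanSpace.single j (1:ℝ)) k ^ 2) = 1 := by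
      intro j
      rw [Finset.sum_eq_single j]
      · simp [EuclideanSpace.single_apply]
      · intro k _ hk; simp [EuclideanSpace.single_apply, hk]
      · intro hj; exact absurd (Finset.mem_univ j) hj
    have hSe : ∀ (j : Fin m) (z : Fin m → ℝ),
        (∑ k, (EuclideanSpace.single j (1:ℝ)) k * z k) = z j := by
      intro j z
      rw [Finset.sum_eq_single j]
      · simp [EuclideanSpace.single_apply]
      · intro k _ hk; simp [EuclideanSpace.single_apply, hk]
      · intro hj; exact absurd (Finset.mem_univ j) hj
    have j0 : Fin m := ⟨0, hm⟩
    have hsumα : (∑ i, α i) = 0 := by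
      have h1 := (hpoly (EuclideanSpace.single j0 (1:ℝ))).1
      rw [hXe j0] at h1
      simpa using h1
    have hP : ∀ k : Fin m, (∑ i, α i * p i k) = 0 := by
      intro k
      have h1 := (hpoly (EuclideanSpace.single k (1:ℝ))).2
      rw [hXe k] at h1
      have h2 : ∀ i ∈ univ, α i * (∑ k', (EuclideanSpace.single k (1:ℝ)) k' * p i k')
          = α i * p i k := fun i _ => by rw [hSe k (fun k' => p i k')]
      rw [Finset.sum_congr rfl h2] at h1
      simpa using h1
    -- evaluate at the points p j
    have hjeq : ∀ j : V, α j * (a^2 * b^2) + β0 + (∑ k, β k * p j k) = 0 := by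
      intro j
      have h1 := heval (p j)
      have h2 : (∑ i, α i * F i (p j)) = α j * (a^2 * b^2) := by
        rw [Finset.sum_eq_single j]
        · rw [hFdiag j]
        · intro i _ hij; rw [hFoff i j hij, mul_zero]
        · intro hj; exact absurd (Finset.mem_univ j) hj
      rw [h2] at h1
      exact h1
    -- multiply by α and sum
    have hsq : (∑ j, α j * α j) = 0 := by
      have h5 : ∑ j, α j * (α j * (a^2 * b^2) + β0 + (∑ k, β k * p j k)) = 0 :=
        Finset.sum_eq_zero fun j _ => by rw [hjeq j, mul_zero]
      have h6 : ∀ j ∈ univ, α j * (α j * (a^2 * b^2) + β0 + (∑ k, β k * p j k))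
          = (α j * α j) * (a^2 * b^2) + α j * β0 + (∑ k, (α j * p j k) * β k) := by
        intro j _
        have e : α j * (∑ k, β k * p j k) = ∑ k, (α j * p j k) * β k := by
          rw [Finset.mul_sum]; exact Finset.sum_congr rfl fun k _ => by ring
        rw [mul_add, e]; ring
      rw [Finset.sum_congr rfl h6, Finset.sum_add_distrib, Finset.sum_add_distrib] at h5
      have h7 : ∑ j, ∑ k, (α j * p j k) * β k = 0 := by
        rw [Finset.sum_comm]
        refine Finset.sum_eq_zero fun k _ => ?_
        rw [← Finset.sum_mul, hP k, zero_mul]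
      have h8 : ∑ j, (α j * α j) * (a^2 * b^2) = (∑ j, α j * α j) * (a^2 * b^2) :=
        (Finset.sum_mul _ _ _).symm
      have h9 : ∑ j, α j * β0 = (∑ j, α j) * β0 := (Finset.sum_mul _ _ _).symm
      rw [h7, h8, h9, hsumα, zero_mul, add_zero, add_zero] at h5
      have hab : a^2 * b^2 ≠ 0 := by positivity
      exact (mul_eq_zero.mp h5).resolve_right hab
    have hα0 : ∀ j : V, α j = 0 := by
      intro j
      have := (Finset.sum_eq_zero_iff_of_nonneg
        (fun j _ => mul_self_nonneg (α j))).mp hsq j (Finset.mem_univ j)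
      exact mul_self_eq_zero.mp this
    -- now the affine part
    have hαsum0 : ∀ x : EuclideanSpace ℝ (Fin m), (∑ i, α i * F i x) = 0 := by
      intro x
      exact Finset.sum_eq_zero fun i _ => by rw [hα0 i, zero_mul]
    have hβ00 : β0 = 0 := by
      have h1 := heval 0
      rw [hαsum0 0] at h1
      have h2 : (∑ k, β k * (0 : EuclideanSpace ℝ (Fin m)) k) = 0 :=
        Finset.sum_eq_zero fun k _ => by simp
      rw [h2] at h1
      linarith
    have hβk : ∀ k : Fin m, β k = 0 := by
      intro k
      have h1 := heval (EuclideanSpace.single k (1:ℝ))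
      rw [hαsum0, hβ00] at h1
      have h2 : (∑ k', β k' * (EuclideanSpace.single k (1:ℝ)) k') = β k := by
        rw [show (∑ k', β k' * (EuclideanSpace.single k (1:ℝ)) k')
            = ∑ k', (EuclideanSpace.single k (1:ℝ)) k' * β k' from
          Finset.sum_congr rfl fun k' _ => mul_comm _ _, hSe k β]
      rw [h2] at h1
      linarith
    rintro (i | u | k)
    · exact hα0 i
    · cases u; exact hβ00
    · exact hβk k
  letI : Fintype ↥(Set.range w) := (Set.finite_range w).fintype
  have hcard := linearIndependent_le_span' v hli (Set.range w)
    (Set.range_subset_iff.mpr hspan)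
  have h10 : Fintype.card (V ⊕ Unit ⊕ Fin m) ≤ Fintype.card ↥(Set.range w) := by
    rw [Cardinal.mk_fintype] at hcard; exact_mod_cast hcard
  have h11 : Fintype.card ↥(Set.range w)
      ≤ Fintype.card (Unit ⊕ Unit ⊕ Fin m ⊕ Fin m ⊕ Sym2 (Fin m)) :=
    Fintype.card_range_le w
  simp only [Fintype.card_sum, Fintype.card_fin, Fintype.card_unit] at h10 h11
  omega

theorem stmt_17 {V : Type*} [Fintype V] (G : SimpleGraph V) (m : ℕ)
    (hnc : ¬∀ x y : V, x ≠ y → G.Adj x y)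
    (hne : ¬∀ x y : V, ¬G.Adj x y)
    (h : ∃ f : V → EuclideanSpace ℝ (Fin m), Function.Injective f ∧
      ∀ x x' y y' : V, x ≠ x' → y ≠ y' →
        (dist (f x) (f x') = dist (f y) (f y') ↔ (G.Adj x x' ↔ G.Adj y y'))) :
    Fintype.card V ≤ (m + 1) * (m + 2) / 2 := by
  classical
  obtain ⟨f, hinj, hf⟩ := h
  rcases Nat.eq_zero_or_pos m with hm | hm
  · subst hm
    have hEsub : ∀ x y : EuclideanSpace ℝ (Fin 0), x = y := fun x y =>
      PiLp.ext fun k => Fin.elim0 k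
    have hV : Subsingleton V := ⟨fun x y => hinj (hEsub _ _)⟩
    have hc1 := Fintype.card_le_one_iff_subsingleton.mpr hV
    calc Fintype.card V ≤ 1 := hc1
      _ ≤ (0 + 1) * (0 + 2) / 2 := by norm_num
  · push_neg at hnc hne
    obtain ⟨x0, y0, hxy0, hnadj⟩ := hnc
    obtain ⟨x1, y1, hadj⟩ := hne
    have hxy1 : x1 ≠ y1 := G.ne_of_adj hadj
    have ha : dist (f x1) (f y1) ≠ 0 :=
      dist_ne_zero.mpr (fun h' => hxy1 (hinj h'))
    have hb : dist (f x0) (f y0) ≠ 0 :=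
      dist_ne_zero.mpr (fun h' => hxy0 (hinj h'))
    have hdist : ∀ i j : V, i ≠ j →
        dist (f i) (f j) = dist (f x1) (f y1) ∨
        dist (f i) (f j) = dist (f x0) (f y0) := by
      intro i j hij
      by_cases hAdj : G.Adj i j
      · exact Or.inl ((hf i j x1 y1 hij hxy1).mpr (iff_of_true hAdj hadj))
      · exact Or.inr ((hf i j x0 y0 hij hxy0).mpr (iff_of_false hAdj hnadj))
    have hmain := core_bound hm f ha hb hdist
    have hs : Fintype.card (Sym2 (Fin m)) = (m + 1) * m / 2 := by
      rw [Sym2.card]; simp [Nat.choose_two_right]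
    rw [hs] at hmain
    obtain ⟨c, hc⟩ := Nat.even_mul_succ_self m
    have e1 : (m + 1) * m = c + c := by rw [mul_comm]; exact hc
    have e2 : (m + 1) * (m + 2) = (c + c) + 2 * (m + 1) := by
      rw [← hc]; ring
    rw [e1] at hmain
    rw [e2]
    omega
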